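/- Let α be a type with decidable equality, let G = Equiv.Perm α, and for a ∈ α let Stab(a) = {σ ∈ G : σ a = a} be the stabilizer subgroup of a. Fix i, j ∈ α. Then: (a) for every g ∈ G with g j = i, the double coset Stab(i)*{g}*Stab(j) equals {σ ∈ G : σ j = i}, and moreover the right coset Stab(i)*{g} equals the left coset {g}*Stab(j); and (b) for every x ∈ G with x j ≠ i, the double coset Stab(i)*{x}*Stab(j) equals {σ ∈ G : σ j ≠ i}. In particular, G decomposes into exactly two (Stab(i), Stab(j))-double cosets. -/

import Mathlib

open Pointwise

/-- for stabilizers `Stab(i)`, `Stab(j)` in `Equiv.Perm α`: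
(a) for `g` with `g j = i`, the double coset `Stab(i) g Stab(j)` is `{σ | σ j = i}` and
`Stab(i) g = g Stab(j)`; (b) for `x` with `x j ≠ i`, the double coset `Stab(i) x Stab(j)`
is `{σ | σ j ≠ i}`. -/
theorem stabilizer_double_cosets {α : Type*} [DecidableEq α] (i j : α) :
    (∀ g : Equiv.Perm α, g j = i →
      ({σ : Equiv.Perm α | σ i = i} * {g} * {σ : Equiv.Perm α | σ j = j}
          = {σ : Equiv.Perm α | σ j = i}) ∧
      ({σ : Equiv.Perm α | σ i = i} * {g} = {g} * {σ : Equiv.Perm α | σ j = j})) ∧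
    (∀ x : Equiv.Perm α, x j ≠ i →
      {σ : Equiv.Perm α | σ i = i} * {x} * {σ : Equiv.Perm α | σ j = j}
          = {σ : Equiv.Perm α | σ j ≠ i}) := by
  constructor
  · intro g hg
    constructor
    · ext σ
      simp only [Set.mem_mul, Set.mem_singleton_iff, Set.mem_setOf_eq]
      constructor
      · rintro ⟨y, ⟨h, hh, g', hg', rfl⟩, k, hk, rfl⟩
        subst hg'
        simp [Equiv.Perm.mul_apply, hk, hg, hh]
      · intro hσ
        refine ⟨(σ * g⁻¹) * g, ⟨σ * g⁻¹, ?_, g, rfl, rfl⟩, 1, by simp, by group⟩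
        simp [Equiv.Perm.mul_apply, ← hg, hσ]
    · ext σ
      simp only [Set.mem_mul, Set.mem_singleton_iff, Set.mem_setOf_eq]
      constructor
      · rintro ⟨h, hh, g', hg', rfl⟩
        subst hg'
        refine ⟨g', rfl, g'⁻¹ * h * g', ?_, by group⟩
        simp only [Equiv.Perm.mul_apply, hg, hh]
        rw [← hg]; simp
      · rintro ⟨g', hg', k, hk, rfl⟩
        subst hg'
        refine ⟨g' * k * g'⁻¹, ?_, g', rfl, by group⟩
        simp [Equiv.Perm.mul_apply, ← hg, hk]
  · intro x hx
    ext σ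
    simp only [Set.mem_mul, Set.mem_singleton_iff, Set.mem_setOf_eq]
    constructor
    · rintro ⟨y, ⟨h, hh, x', hx', rfl⟩, k, hk, rfl⟩
      subst hx'
      simp only [Equiv.Perm.mul_apply, hk]
      intro hcon
      apply hx
      have h1 : x' j = h⁻¹ i := by rw [← hcon]; simp
      rw [h1, Equiv.Perm.inv_def]
      exact (Equiv.symm_apply_eq h).mpr hh.symm
    · intro hσ
      have hb : x⁻¹ i ≠ j := fun h => hx (by rw [← h]; simp)
      have hc : σ⁻¹ i ≠ j := fun h => hσ (by rw [← h]; simp)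
      set k : Equiv.Perm α := Equiv.swap (x⁻¹ i) (σ⁻¹ i) with hkdef
      have hkj : k j = j := Equiv.swap_apply_of_ne_of_ne (Ne.symm hb) (Ne.symm hc)
      refine ⟨(σ * k * x⁻¹) * x, ⟨σ * k * x⁻¹, ?_, x, rfl, rfl⟩, k⁻¹, ?_, by group⟩
      · simp only [Equiv.Perm.mul_apply]
        rw [hkdef, Equiv.swap_apply_left, Equiv.Perm.inv_def, Equiv.apply_symm_apply]
      · show k⁻¹ j = j
        rw [hkdef, Equiv.swap_inv]
        exact Equiv.swap_apply_of_ne_of_ne (Ne.symm hb) (Ne.symm hc)
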